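/- Let B : x → x and B' : x → x be 1-endomorphisms of an object x in a strict 2-category, both equivalences with chosen quasi-inverse data. Then the conjugation bijection of categorical traces satisfies ψ(B'∘B) = ψ(B') ∘ ψ(B), where B'∘B is equipped with the composite quasi-inverse data, and ψ(1_x) = id. -/

import Mathlib

open CategoryTheory

universe v u

variable {V : Type u} [Category.{v} V]

/-- The conjugation map `ψ(B) : Tr(A) → Tr(BAC)` of categorical traces,
`φ ↦ (B ∘₀ φ ∘₀ C) ∘₁ u`, for an endomorphism `A` and an equivalence `B` with
quasi-inverse data `(C, u : 1 ⇒ BC)`.  (Here 1-morphisms are endofunctors of `V`,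
`B ∘ C` in the paper's right-to-left convention is `c ⋙ b`.) -/
def psi (A b c : V ⥤ V) (u : 𝟭 V ⟶ c ⋙ b) :
    (𝟭 V ⟶ A) → (𝟭 V ⟶ c ⋙ (A ⋙ b)) :=
  fun φ => u ≫ Functor.whiskerLeft c (b.leftUnitor.inv ≫ Functor.whiskerRight φ b)

/-- The quasi-inverse datum `(B' ∘ B, C ∘ C', (B' ∘₀ u ∘₀ C') ∘₁ u')` for the composite
of two equivalences `(B, C, u)` and `(B', C', u')`. -/
def compositeU (b c b' c' : V ⥤ V) (u : 𝟭 V ⟶ c ⋙ b) (u' : 𝟭 V ⟶ c' ⋙ b') :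
    𝟭 V ⟶ (c' ⋙ c) ⋙ (b ⋙ b') :=
  u' ≫ Functor.whiskerLeft c' (b'.leftUnitor.inv ≫ Functor.whiskerRight u b')

/-- **Multiplicativity of the conjugation maps of categorical traces.**
For composable self-equivalences `B, B'` of `x` (here: endofunctors of `V`) with
quasi-inverse data `(C,u,v)`, `(C',u',v')`, equipping `B' ∘ B` with the composite
quasi-inverse data one has `ψ(B' ∘ B) = ψ(B') ∘ ψ(B)`, and `ψ(1_x) = id`. -/
theorem psi_comp_and_id (A b c b' c' : V ⥤ V)
    (u : 𝟭 V ≅ c ⋙ b) (v : 𝟭 V ≅ b ⋙ c)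
    (u' : 𝟭 V ≅ c' ⋙ b') (v' : 𝟭 V ≅ b' ⋙ c') :
    (∀ φ : 𝟭 V ⟶ A,
      psi A (b ⋙ b') (c' ⋙ c) (compositeU b c b' c' u.hom u'.hom) φ =
        psi (c ⋙ (A ⋙ b)) b' c' u'.hom (psi A b c u.hom φ)) ∧
    (∀ φ : 𝟭 V ⟶ A, psi A (𝟭 V) (𝟭 V) ((𝟭 V).leftUnitor.inv) φ = φ) := by
  constructor <;> intro φ <;> ext X <;> simp [psi, compositeU]
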